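/- Let n ≥ 4 and let S : ℝⁿ → (M_n(ℝ))ⁿ be such that each matrix S_i(x) is symmetric with trace zero, and such that for all Λ ∈ SO(n), x ∈ ℝⁿ and i: S_i(Λx) = Σ_{j=1}^n (Λ⁻¹)_{j,i} · Λ S_j(x) Λᵀ. Then there exist functions g₁, g₂ : [0,∞) → ℝ such that for every x ∈ ℝⁿ and every i: S_i(x) = g₁(|x|)·x_i·(x xᵀ − (|x|²/n)·1) + g₂(|x|)·(e_i xᵀ + x e_iᵀ − (2 x_i/n)·1), where |x| is the Euclidean norm of x, 1 is the identity matrix, and (e_1,…,e_n) is the standard basis of ℝⁿ. -/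

import Mathlib

open Matrix BigOperators

noncomputable section

/-- Euclidean norm on `ℝⁿ`. -/
def nrm {n : ℕ} (x : Fin n → ℝ) : ℝ := Real.sqrt (∑ i, x i ^ 2)

/-- signed permutation matrix -/
def sp {n : ℕ} (σ : Equiv.Perm (Fin n)) (d : Fin n → ℝ) : Matrix (Fin n) (Fin n) ℝ :=
  Matrix.of fun i j => if σ i = j then d j else 0

lemma sp_eq {n : ℕ} (σ : Equiv.Perm (Fin n)) (d : Fin n → ℝ) :
    sp σ d = σ.permMatrix ℝ * Matrix.diagonal d := by
  ext i j
  simp [sp, Matrix.mul_apply, Matrix.diagonal, PEquiv.toMatrix_apply,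
    Equiv.Perm.permMatrix, Equiv.toPEquiv, Finset.sum_ite_eq]

lemma sp_det {n : ℕ} (σ : Equiv.Perm (Fin n)) (d : Fin n → ℝ) :
    (sp σ d).det = (Equiv.Perm.sign σ : ℝ) * ∏ k, d k := by
  rw [sp_eq, Matrix.det_mul, Matrix.det_permutation, Matrix.det_diagonal]

lemma sp_orth {n : ℕ} (σ : Equiv.Perm (Fin n)) (d : Fin n → ℝ)
    (hd : ∀ k, d k = 1 ∨ d k = -1) : (sp σ d)ᵀ * sp σ d = 1 := by
  ext i j
  simp only [Matrix.mul_apply, Matrix.transpose_apply, sp, Matrix.of_apply]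
  rw [Finset.sum_eq_single (σ.symm i)]
  · rcases eq_or_ne i j with rfl | hij
    · simp only [Equiv.apply_symm_apply, if_pos rfl, Matrix.one_apply_eq]
      rcases hd i with h | h <;> simp [h]
    · simp [Equiv.apply_symm_apply, Matrix.one_apply, hij]
  · intro k _ hk
    have : σ k ≠ i := fun h => hk (by simp [← h])
    simp [this]
  · simp

lemma sp_mulVec {n : ℕ} (σ : Equiv.Perm (Fin n)) (d : Fin n → ℝ) (x : Fin n → ℝ) :
    sp σ d *ᵥ x = fun i => d (σ i) * x (σ i) := by
  ext i
  simp [Matrix.mulVec, dotProduct, sp, Finset.sum_ite_eq]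

lemma sp_conj {n : ℕ} (σ : Equiv.Perm (Fin n)) (d : Fin n → ℝ)
    (M : Matrix (Fin n) (Fin n) ℝ) (a b : Fin n) :
    (sp σ d * M * (sp σ d)ᵀ) a b = d (σ a) * d (σ b) * M (σ a) (σ b) := by
  simp only [Matrix.mul_apply, Matrix.transpose_apply, sp, Matrix.of_apply]
  rw [Finset.sum_eq_single (σ b)]
  · rw [Finset.sum_eq_single (σ a)]
    · simp only [if_pos rfl, if_true]; ring
    · intro k _ hk
      rw [if_neg (Ne.symm hk), zero_mul]
    · simp
  · intro k _ hk
    rw [Finset.sum_eq_single (σ a)]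
    · rw [if_neg (Ne.symm hk), mul_zero]
    · intro l _ hl
      rw [if_neg (Ne.symm hl), zero_mul]
    · simp
  · simp

section Master

variable {n : ℕ} [NeZero n] {S : (Fin n → ℝ) → Fin n → Matrix (Fin n) (Fin n) ℝ}

lemma master
    (hequiv : ∀ Λ : Matrix (Fin n) (Fin n) ℝ, Λᵀ * Λ = 1 → Λ.det = 1 →
      ∀ (x : Fin n → ℝ) (i : Fin n),
        S (Λ *ᵥ x) i = ∑ j, Λ⁻¹ j i • (Λ * S x j * Λᵀ))
    (r : ℝ) (σ : Equiv.Perm (Fin n)) (d : Fin n → ℝ)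
    (hd : ∀ k, d k = 1 ∨ d k = -1)
    (hdet : (Equiv.Perm.sign σ : ℝ) * ∏ k, d k = 1)
    (hfix : (sp σ d) *ᵥ Pi.single 0 r = Pi.single 0 r) (i a b : Fin n) :
    S (Pi.single 0 r) i a b
      = d (σ i) * d (σ a) * d (σ b) * S (Pi.single 0 r) (σ i) (σ a) (σ b) := by
  have horth := sp_orth σ d hd
  have hdet' : (sp σ d).det = 1 := by rw [sp_det, hdet]
  have h := hequiv (sp σ d) horth hdet' (Pi.single 0 r) i
  rw [hfix, Matrix.inv_eq_left_inv horth] at h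
  have h2 := congrFun (congrFun h a) b
  rw [Matrix.sum_apply] at h2
  have he : ∀ j, ((sp σ d)ᵀ j i • (sp σ d * S (Pi.single 0 r) j * (sp σ d)ᵀ)) a b
      = (if σ i = j then d j * (sp σ d * S (Pi.single 0 r) j * (sp σ d)ᵀ) a b else 0) := by
    intro j
    simp only [Matrix.smul_apply, Matrix.transpose_apply, sp, Matrix.of_apply, ite_smul,
      zero_smul, smul_eq_mul]
    rw [ite_mul, zero_mul]
  rw [Finset.sum_congr rfl (fun j _ => he j), Finset.sum_ite_eq] at h2
  simp only [Finset.mem_univ, if_pos] at h2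
  rw [sp_conj] at h2
  rw [h2]; ring

lemma signflip
    (hequiv : ∀ Λ : Matrix (Fin n) (Fin n) ℝ, Λᵀ * Λ = 1 → Λ.det = 1 →
      ∀ (x : Fin n → ℝ) (i : Fin n),
        S (Λ *ᵥ x) i = ∑ j, Λ⁻¹ j i • (Λ * S x j * Λᵀ))
    (r : ℝ) (k m i a b : Fin n) (hkm : k ≠ m)
    (hall : (k ≠ 0 ∧ m ≠ 0) ∨ r = 0)
    (hmi : m ≠ i) (hma : m ≠ a) (hmb : m ≠ b)
    (hodd : (if i = k then (-1:ℝ) else 1) * (if a = k then -1 else 1)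
        * (if b = k then -1 else 1) = -1) :
    S (Pi.single 0 r) i a b = 0 := by
  set d : Fin n → ℝ := fun p => if p = k ∨ p = m then -1 else 1 with hdd
  have hd : ∀ p, d p = 1 ∨ d p = -1 := by
    intro p; by_cases h : p = k ∨ p = m <;> simp [hdd, h]
  have hdp : ∀ p, d p = (if p = k then (-1:ℝ) else 1) * (if p = m then -1 else 1) := by
    intro p
    simp only [hdd]
    rcases eq_or_ne p k with rfl | h1
    · rw [if_pos (Or.inl rfl), if_pos rfl, if_neg hkm]; norm_num
    · rcases eq_or_ne p m with rfl | h2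
      · rw [if_pos (Or.inr rfl), if_neg h1, if_pos rfl]; norm_num
      · rw [if_neg (by tauto), if_neg h1, if_neg h2]; norm_num
  have hprod : ∏ p, d p = 1 := by
    rw [Finset.prod_congr rfl (fun p _ => hdp p), Finset.prod_mul_distrib,
      Finset.prod_ite_eq' Finset.univ k (fun _ => (-1:ℝ)),
      Finset.prod_ite_eq' Finset.univ m (fun _ => (-1:ℝ))]
    simp
  have hdet : (Equiv.Perm.sign (1 : Equiv.Perm (Fin n)) : ℝ) * ∏ p, d p = 1 := by
    simp [hprod]
  have hfix : (sp 1 d) *ᵥ Pi.single 0 r = Pi.single 0 r := by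
    rw [sp_mulVec]
    ext p
    simp only [Equiv.Perm.coe_one, id_eq]
    rcases hall with ⟨hk0, hm0⟩ | hr0
    · rcases eq_or_ne p 0 with rfl | hp
      · have h0 : d 0 = 1 := by
          simp only [hdd]
          rw [if_neg (by push_neg; exact ⟨Ne.symm hk0, Ne.symm hm0⟩)]
        rw [h0, one_mul]
      · rw [Pi.single_eq_of_ne hp, mul_zero]
    · subst hr0
      simp
  have h := master hequiv r 1 d hd hdet hfix i a b
  simp only [Equiv.Perm.coe_one, id_eq] at h
  have hdi : d i = (if i = k then (-1:ℝ) else 1) := by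
    rw [hdp i, if_neg (Ne.symm hmi), mul_one]
  have hda : d a = (if a = k then (-1:ℝ) else 1) := by
    rw [hdp a, if_neg (Ne.symm hma), mul_one]
  have hdb : d b = (if b = k then (-1:ℝ) else 1) := by
    rw [hdp b, if_neg (Ne.symm hmb), mul_one]
  rw [hdi, hda, hdb] at h
  rw [hodd] at h
  linarith

lemma swaprel
    (hequiv : ∀ Λ : Matrix (Fin n) (Fin n) ℝ, Λᵀ * Λ = 1 → Λ.det = 1 →
      ∀ (x : Fin n → ℝ) (i : Fin n),
        S (Λ *ᵥ x) i = ∑ j, Λ⁻¹ j i • (Λ * S x j * Λᵀ))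
    (r : ℝ) (u v : Fin n) (hu : u ≠ 0) (hv : v ≠ 0) (huv : u ≠ v) (i a b : Fin n) :
    S (Pi.single 0 r) i a b
      = (if i = u then (-1:ℝ) else 1) * (if a = u then -1 else 1) * (if b = u then -1 else 1)
        * S (Pi.single 0 r) (Equiv.swap u v i) (Equiv.swap u v a) (Equiv.swap u v b) := by
  set σ := Equiv.swap u v with hσ
  set d : Fin n → ℝ := fun p => if p = v then -1 else 1 with hdd
  have hd : ∀ p, d p = 1 ∨ d p = -1 := by
    intro p; by_cases h : p = v <;> simp [hdd, h]
  have hprod : ∏ p, d p = -1 := by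
    simp only [hdd]
    rw [Finset.prod_ite_eq' Finset.univ v (fun _ => (-1:ℝ))]
    simp
  have hdet : (Equiv.Perm.sign σ : ℝ) * ∏ p, d p = 1 := by
    rw [hprod, hσ, Equiv.Perm.sign_swap huv]
    simp
  have hfix : (sp σ d) *ᵥ Pi.single 0 r = Pi.single 0 r := by
    rw [sp_mulVec]
    ext p
    rcases eq_or_ne p 0 with rfl | hp
    · have h0 : σ 0 = 0 := Equiv.swap_apply_of_ne_of_ne (Ne.symm hu) (Ne.symm hv)
      rw [h0]
      have h1 : d 0 = 1 := by
        simp only [hdd]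
        rw [if_neg (Ne.symm hv)]
      rw [h1, one_mul]
    · have hσp : σ p ≠ 0 := by
        intro h
        apply hp
        have h2 := congrArg σ.symm h
        rwa [Equiv.symm_apply_apply, hσ, Equiv.symm_swap,
          Equiv.swap_apply_of_ne_of_ne (Ne.symm hu) (Ne.symm hv)] at h2
      rw [Pi.single_eq_of_ne hσp, mul_zero, Pi.single_eq_of_ne hp]
  have h := master hequiv r σ d hd hdet hfix i a b
  have key : ∀ p : Fin n, d (σ p) = (if p = u then (-1:ℝ) else 1) := by
    intro p
    have hiff : σ p = v ↔ p = u := by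
      rw [hσ, Equiv.apply_eq_iff_eq_symm_apply, Equiv.symm_swap, Equiv.swap_apply_right]
    simp only [hdd]
    rw [if_congr hiff rfl rfl]
  rw [key i, key a, key b] at h
  exact h

end Master

section Struct

variable {n : ℕ} [NeZero n] {S : (Fin n → ℝ) → Fin n → Matrix (Fin n) (Fin n) ℝ}

lemma exists_avoid (hn : 4 ≤ n) (p q s : Fin n) : ∃ m : Fin n, m ≠ p ∧ m ≠ q ∧ m ≠ s := by
  by_contra h
  push_neg at h
  have hsub : (Finset.univ : Finset (Fin n)) ⊆ {p, q, s} := by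
    intro m _
    simp only [Finset.mem_insert, Finset.mem_singleton]
    by_contra hm
    push_neg at hm
    exact hm.2.2 (h m hm.1 hm.2.1)
  have hc := Finset.card_le_card hsub
  have h3 : ({p, q, s} : Finset (Fin n)).card ≤ 3 :=
    (Finset.card_insert_le _ _).trans (Nat.succ_le_succ ((Finset.card_insert_le _ _).trans
      (by simp)))
  simp only [Finset.card_univ, Fintype.card_fin] at hc
  omega

lemma Tsym (hsymm : ∀ x i, (S x i)ᵀ = S x i) (x : Fin n → ℝ) (i a b : Fin n) :
    S x i a b = S x i b a := by
  conv_lhs => rw [← hsymm x i]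
  rfl

lemma Tskew (hsymm : ∀ x i, (S x i)ᵀ = S x i)
    (hequiv : ∀ Λ : Matrix (Fin n) (Fin n) ℝ, Λᵀ * Λ = 1 → Λ.det = 1 →
      ∀ (x : Fin n → ℝ) (i : Fin n),
        S (Λ *ᵥ x) i = ∑ j, Λ⁻¹ j i • (Λ * S x j * Λᵀ))
    (r : ℝ) (i a b : Fin n) (ha : a ≠ 0) (hb : b ≠ 0) (hab : a ≠ b)
    (hia : i ≠ a) (hib : i ≠ b) : S (Pi.single 0 r) i a b = 0 := by
  have h := swaprel hequiv r a b ha hb hab i a b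
  simp [Equiv.swap_apply_left, Equiv.swap_apply_right,
    Equiv.swap_apply_of_ne_of_ne hia hib, hia, Ne.symm hab] at h
  rw [Tsym hsymm (Pi.single 0 r) i b a] at h
  linarith [h]

lemma Tvanish (hn : 4 ≤ n)
    (hsymm : ∀ x i, (S x i)ᵀ = S x i)
    (hequiv : ∀ Λ : Matrix (Fin n) (Fin n) ℝ, Λᵀ * Λ = 1 → Λ.det = 1 →
      ∀ (x : Fin n → ℝ) (i : Fin n),
        S (Λ *ᵥ x) i = ∑ j, Λ⁻¹ j i • (Λ * S x j * Λᵀ))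
    (r : ℝ) (i a b : Fin n)
    (hbad : ¬ ((i = 0 ∧ a = 0 ∧ b = 0) ∨ (i = 0 ∧ a = b)
      ∨ (i ≠ 0 ∧ a = 0 ∧ b = i) ∨ (i ≠ 0 ∧ a = i ∧ b = 0))) :
    S (Pi.single 0 r) i a b = 0 := by
  by_cases hi : i = 0
  · subst hi
    have hab : a ≠ b := fun h => hbad (Or.inr (Or.inl ⟨rfl, h⟩))
    rcases eq_or_ne a 0 with rfl | ha
    · have hb : b ≠ 0 := fun h => hab h.symm
      obtain ⟨m, hm1, hm2, hm3⟩ := exists_avoid hn 0 b b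
      exact signflip hequiv r b m 0 0 b (Ne.symm hm2) (Or.inl ⟨hb, hm1⟩) hm1 hm1 hm2
        (by simp [Ne.symm hb])
    · rcases eq_or_ne b 0 with rfl | hb
      · obtain ⟨m, hm1, hm2, hm3⟩ := exists_avoid hn 0 a a
        exact signflip hequiv r a m 0 a 0 (Ne.symm hm2) (Or.inl ⟨ha, hm1⟩) hm1 hm2 hm1
          (by simp [Ne.symm ha])
      · exact Tskew hsymm hequiv r 0 a b ha hb hab (Ne.symm ha) (Ne.symm hb)
  · rcases eq_or_ne a 0 with rfl | ha
    · have hbi : b ≠ i := fun h => hbad (Or.inr (Or.inr (Or.inl ⟨hi, rfl, h⟩)))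
      rcases eq_or_ne b 0 with rfl | hb
      · obtain ⟨m, hm1, hm2, hm3⟩ := exists_avoid hn 0 i i
        exact signflip hequiv r i m i 0 0 (Ne.symm hm2) (Or.inl ⟨hi, hm1⟩) hm2 hm1 hm1
          (by simp [Ne.symm hi])
      · obtain ⟨m, hm1, hm2, hm3⟩ := exists_avoid hn 0 i b
        exact signflip hequiv r i m i 0 b (Ne.symm hm2) (Or.inl ⟨hi, hm1⟩) hm2 hm1 hm3
          (by simp [Ne.symm hi, hbi])
    · rcases eq_or_ne b 0 with rfl | hb
      · have hai : a ≠ i := fun h => hbad (Or.inr (Or.inr (Or.inr ⟨hi, h, rfl⟩)))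
        obtain ⟨m, hm1, hm2, hm3⟩ := exists_avoid hn 0 i a
        exact signflip hequiv r i m i a 0 (Ne.symm hm2) (Or.inl ⟨hi, hm1⟩) hm2 hm3 hm1
          (by simp [Ne.symm hi, hai])
      · rcases eq_or_ne a b with rfl | hab
        · rcases eq_or_ne a i with rfl | hai
          · obtain ⟨m, hm1, hm2, hm3⟩ := exists_avoid hn 0 a a
            exact signflip hequiv r a m a a a (Ne.symm hm2) (Or.inl ⟨ha, hm1⟩) hm2 hm2 hm2
              (by simp)
          · obtain ⟨m, hm1, hm2, hm3⟩ := exists_avoid hn 0 i a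
            exact signflip hequiv r i m i a a (Ne.symm hm2) (Or.inl ⟨hi, hm1⟩) hm2 hm3 hm3
              (by simp [hai])
        · rcases eq_or_ne i a with rfl | hia
          · obtain ⟨m, hm1, hm2, hm3⟩ := exists_avoid hn 0 i b
            exact signflip hequiv r b m i i b (Ne.symm hm3) (Or.inl ⟨hb, hm1⟩) hm2 hm2 hm3
              (by simp [hab])
          · rcases eq_or_ne i b with rfl | hib
            · obtain ⟨m, hm1, hm2, hm3⟩ := exists_avoid hn 0 i a
              exact signflip hequiv r a m i a i (Ne.symm hm3) (Or.inl ⟨ha, hm1⟩) hm2 hm3 hm2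
                (by simp [Ne.symm hab])
            · exact Tskew hsymm hequiv r i a b ha hb hab hia hib

lemma Tdiag_eq
    (hequiv : ∀ Λ : Matrix (Fin n) (Fin n) ℝ, Λᵀ * Λ = 1 → Λ.det = 1 →
      ∀ (x : Fin n → ℝ) (i : Fin n),
        S (Λ *ᵥ x) i = ∑ j, Λ⁻¹ j i • (Λ * S x j * Λᵀ))
    (r : ℝ) (a b : Fin n) (ha : a ≠ 0) (hb : b ≠ 0) :
    S (Pi.single 0 r) 0 a a = S (Pi.single 0 r) 0 b b := by
  rcases eq_or_ne a b with rfl | hab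
  · rfl
  · have h := swaprel hequiv r a b ha hb hab 0 a a
    simpa [Equiv.swap_apply_left, Equiv.swap_apply_of_ne_of_ne (Ne.symm ha) (Ne.symm hb),
      Ne.symm ha] using h

lemma Toff_eq
    (hequiv : ∀ Λ : Matrix (Fin n) (Fin n) ℝ, Λᵀ * Λ = 1 → Λ.det = 1 →
      ∀ (x : Fin n → ℝ) (i : Fin n),
        S (Λ *ᵥ x) i = ∑ j, Λ⁻¹ j i • (Λ * S x j * Λᵀ))
    (r : ℝ) (a b : Fin n) (ha : a ≠ 0) (hb : b ≠ 0) :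
    S (Pi.single 0 r) a 0 a = S (Pi.single 0 r) b 0 b := by
  rcases eq_or_ne a b with rfl | hab
  · rfl
  · have h := swaprel hequiv r a b ha hb hab a 0 a
    simpa [Equiv.swap_apply_left, Equiv.swap_apply_of_ne_of_ne (Ne.symm ha) (Ne.symm hb),
      Ne.symm ha] using h

end Struct

section Struct2

variable {n : ℕ} [NeZero n] {S : (Fin n → ℝ) → Fin n → Matrix (Fin n) (Fin n) ℝ}

lemma one_ne_zero_fin (hn : 4 ≤ n) : (1 : Fin n) ≠ 0 := by
  intro h
  have := congrArg Fin.val h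
  rw [Fin.val_one', Nat.mod_eq_of_lt (by omega)] at this
  simp at this

lemma T000 (hn : 4 ≤ n)
    (htr : ∀ x i, (S x i).trace = 0)
    (hequiv : ∀ Λ : Matrix (Fin n) (Fin n) ℝ, Λᵀ * Λ = 1 → Λ.det = 1 →
      ∀ (x : Fin n → ℝ) (i : Fin n),
        S (Λ *ᵥ x) i = ∑ j, Λ⁻¹ j i • (Λ * S x j * Λᵀ))
    (r : ℝ) :
    S (Pi.single 0 r) 0 0 0 = -((n:ℝ) - 1) * S (Pi.single 0 r) 0 1 1 := by
  have h := htr (Pi.single 0 r) 0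
  rw [Matrix.trace] at h
  have hsplit : ∑ a, (S (Pi.single 0 r) 0).diag a
      = S (Pi.single 0 r) 0 0 0 + ∑ a ∈ Finset.univ.erase 0, S (Pi.single 0 r) 0 a a :=
    (Finset.add_sum_erase Finset.univ _ (Finset.mem_univ 0)).symm
  have hconst : ∀ a ∈ Finset.univ.erase 0,
      S (Pi.single 0 r) 0 a a = S (Pi.single 0 r) 0 1 1 := by
    intro a ha
    exact Tdiag_eq hequiv r a 1 (Finset.ne_of_mem_erase ha) (one_ne_zero_fin hn)
  rw [hsplit, Finset.sum_congr rfl hconst, Finset.sum_const,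
    Finset.card_erase_of_mem (Finset.mem_univ 0), Finset.card_univ, Fintype.card_fin] at h
  have hcast : ((n - 1 : ℕ) : ℝ) = (n : ℝ) - 1 := by
    have : 1 ≤ n := by omega
    push_cast [this]
    ring
  rw [nsmul_eq_mul, hcast] at h
  linarith

lemma struct_formula (hn : 4 ≤ n)
    (hsymm : ∀ x i, (S x i)ᵀ = S x i)
    (htr : ∀ x i, (S x i).trace = 0)
    (hequiv : ∀ Λ : Matrix (Fin n) (Fin n) ℝ, Λᵀ * Λ = 1 → Λ.det = 1 →
      ∀ (x : Fin n → ℝ) (i : Fin n),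
        S (Λ *ᵥ x) i = ∑ j, Λ⁻¹ j i • (Λ * S x j * Λᵀ))
    (r : ℝ) (hr : 0 < r) (j : Fin n) :
    S (Pi.single 0 r) j =
      (((-(n:ℝ) * S (Pi.single 0 r) 0 1 1 - 2 * S (Pi.single 0 r) 1 0 1) / r ^ 3)
          * (Pi.single 0 r : Fin n → ℝ) j) •
        (vecMulVec (Pi.single 0 r) (Pi.single 0 r)
          - (r ^ 2 / (n : ℝ)) • (1 : Matrix (Fin n) (Fin n) ℝ))
      + (S (Pi.single 0 r) 1 0 1 / r) •
        (vecMulVec (Pi.single j 1) (Pi.single 0 r) + vecMulVec (Pi.single 0 r) (Pi.single j 1)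
          - (2 * (Pi.single 0 r : Fin n → ℝ) j / (n : ℝ)) • (1 : Matrix (Fin n) (Fin n) ℝ)) := by
  have h10 : (1 : Fin n) ≠ 0 := one_ne_zero_fin hn
  have hn0 : (n : ℝ) ≠ 0 := by positivity
  have hr0 : r ≠ 0 := ne_of_gt hr
  set C := S (Pi.single 0 r) 0 1 1 with hC
  set D := S (Pi.single 0 r) 1 0 1 with hD
  ext a b
  simp only [Matrix.add_apply, Matrix.smul_apply, Matrix.sub_apply, vecMulVec_apply,
    Matrix.one_apply, Pi.single_apply, smul_eq_mul]
  by_cases hj : j = 0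
  · subst hj
    by_cases ha : a = 0 <;> by_cases hb : b = 0
    · subst ha; subst hb
      rw [T000 hn htr hequiv r, ← hC]
      simp only [if_pos rfl, ↓reduceIte]
      field_simp
      ring
    · have hab : a ≠ b := fun h => hb (h.symm.trans ha)
      rw [Tvanish hn hsymm hequiv r 0 a b
        (by rintro (⟨h1,h2,h3⟩|⟨h1,h2⟩|⟨h1,h2,h3⟩|⟨h1,h2,h3⟩) <;> simp_all)]
      simp [ha, hb, hab, Ne.symm hb]
    · have hab : a ≠ b := fun h => ha (h.trans hb)
      rw [Tvanish hn hsymm hequiv r 0 a b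
        (by rintro (⟨h1,h2,h3⟩|⟨h1,h2⟩|⟨h1,h2,h3⟩|⟨h1,h2,h3⟩) <;> simp_all)]
      simp [ha, hb, hab, Ne.symm ha]
    · rcases eq_or_ne a b with rfl | hab
      · rw [Tdiag_eq hequiv r a 1 ha h10, ← hC]
        simp only [if_pos rfl, if_neg ha, if_neg hb, ↓reduceIte]
        field_simp
        ring
      · rw [Tvanish hn hsymm hequiv r 0 a b
          (by rintro (⟨h1,h2,h3⟩|⟨h1,h2⟩|⟨h1,h2,h3⟩|⟨h1,h2,h3⟩) <;> simp_all)]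
        simp [ha, hb, hab, Ne.symm ha, Ne.symm hb, Ne.symm hab]
  · -- j ≠ 0
    by_cases h1 : a = 0 ∧ b = j
    · obtain ⟨ha, hbj⟩ := h1
      have hb : b ≠ 0 := fun h => hj (hbj.symm.trans h)
      have haj : a ≠ j := fun h => hj (h.symm.trans ha)
      have hab : a ≠ b := fun h => hb (h.symm.trans ha)
      rw [ha, hbj, Toff_eq hequiv r j 1 hj h10, ← hD]
      simp only [if_neg hj, if_pos rfl, if_neg (Ne.symm hj), if_neg hab, if_neg haj,
        if_neg (Ne.symm haj), if_neg hb, if_neg (Ne.symm hab)]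
      simp only [if_pos trivial]
      field_simp
      ring
    · by_cases h2 : a = j ∧ b = 0
      · obtain ⟨haj, hb⟩ := h2
        have ha : a ≠ 0 := fun h => hj (haj.symm.trans h)
        have hab : a ≠ b := fun h => ha (h.trans hb)
        rw [haj, hb, Tsym hsymm _ j j 0, Toff_eq hequiv r j 1 hj h10, ← hD]
        simp [hj, Ne.symm hj]
        field_simp
      · rw [Tvanish hn hsymm hequiv r j a b
          (by rintro (⟨g1,g2,g3⟩|⟨g1,g2⟩|⟨g1,g2,g3⟩|⟨g1,g2,g3⟩) <;> simp_all)]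
        push_neg at h1 h2
        by_cases haj : a = j
        · have hb0 : b ≠ 0 := h2 haj
          have ha0 : a ≠ 0 := fun h => hj (haj.symm.trans h)
          simp [hj, ha0, hb0, Ne.symm hb0, Ne.symm ha0]
        · by_cases ha0 : a = 0
          · have hbj : b ≠ j := h1 ha0
            simp [hj, Ne.symm hj, haj, ha0, hbj, Ne.symm hbj]
          · simp [hj, haj, ha0]
end Struct2

section Transfer

variable {n : ℕ} [NeZero n] {S : (Fin n → ℝ) → Fin n → Matrix (Fin n) (Fin n) ℝ}

lemma Szero (hn : 4 ≤ n)
    (hequiv : ∀ Λ : Matrix (Fin n) (Fin n) ℝ, Λᵀ * Λ = 1 → Λ.det = 1 →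
      ∀ (x : Fin n → ℝ) (i : Fin n),
        S (Λ *ᵥ x) i = ∑ j, Λ⁻¹ j i • (Λ * S x j * Λᵀ))
    (i : Fin n) : S (0 : Fin n → ℝ) i = 0 := by
  ext a b
  rw [Matrix.zero_apply]
  have key : S (Pi.single 0 (0:ℝ)) i a b = 0 := by
    obtain ⟨m, hmi, hma, hmb⟩ := exists_avoid hn i a b
    rcases eq_or_ne a b with rfl | hab
    · exact signflip hequiv 0 i m i a a (Ne.symm hmi) (Or.inr rfl) hmi hma hma
        (by by_cases h : a = i <;> simp [h])
    · rcases eq_or_ne i a with rfl | hia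
      · exact signflip hequiv 0 b m i i b (Ne.symm hmb) (Or.inr rfl) hmi hmi hmb
          (by simp [Ne.symm hab, hab])
      · rcases eq_or_ne i b with rfl | hib
        · exact signflip hequiv 0 a m i a i (Ne.symm hma) (Or.inr rfl) hmi hma hmi
            (by simp [hia, hab])
        · exact signflip hequiv 0 i m i a b (Ne.symm hmi) (Or.inr rfl) hmi hma hmb
            (by simp [Ne.symm hia, Ne.symm hib])
  rwa [Pi.single_zero] at key

lemma conj_vecMulVec (Λ : Matrix (Fin n) (Fin n) ℝ) (v w : Fin n → ℝ) :
    Λ * vecMulVec v w * Λᵀ = vecMulVec (Λ *ᵥ v) (Λ *ᵥ w) := by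
  ext a b
  simp only [Matrix.mul_apply, vecMulVec_apply, Matrix.transpose_apply, Matrix.mulVec,
    dotProduct]
  rw [Finset.sum_mul_sum]
  rw [Finset.sum_comm]
  refine Finset.sum_congr rfl fun e _ => ?_
  rw [Finset.sum_mul]
  refine Finset.sum_congr rfl fun c _ => by ring

lemma mulVec_single_col (Λ : Matrix (Fin n) (Fin n) ℝ) (j : Fin n) :
    Λ *ᵥ (Pi.single j 1) = fun a => Λ a j := by
  ext a
  simp [Matrix.mulVec, dotProduct, Pi.single_apply, Finset.sum_ite_eq]

end Transfer

section Transfer2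

variable {n : ℕ} [NeZero n] {S : (Fin n → ℝ) → Fin n → Matrix (Fin n) (Fin n) ℝ}

lemma transfer
    (hequiv : ∀ Λ : Matrix (Fin n) (Fin n) ℝ, Λᵀ * Λ = 1 → Λ.det = 1 →
      ∀ (x : Fin n → ℝ) (i : Fin n),
        S (Λ *ᵥ x) i = ∑ j, Λ⁻¹ j i • (Λ * S x j * Λᵀ))
    (Λ : Matrix (Fin n) (Fin n) ℝ) (hΛ : Λᵀ * Λ = 1) (hdet : Λ.det = 1)
    (y : Fin n → ℝ) (G₁ G₂ c : ℝ)
    (hy : ∀ j, S y j = (G₁ * y j) •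
        (vecMulVec y y - c • (1 : Matrix (Fin n) (Fin n) ℝ))
      + G₂ • (vecMulVec (Pi.single j 1) y + vecMulVec y (Pi.single j 1)
        - (2 * y j / (n : ℝ)) • (1 : Matrix (Fin n) (Fin n) ℝ)))
    (i : Fin n) :
    S (Λ *ᵥ y) i = (G₁ * (Λ *ᵥ y) i) •
        (vecMulVec (Λ *ᵥ y) (Λ *ᵥ y) - c • (1 : Matrix (Fin n) (Fin n) ℝ))
      + G₂ • (vecMulVec (Pi.single i 1) (Λ *ᵥ y) + vecMulVec (Λ *ᵥ y) (Pi.single i 1)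
        - (2 * (Λ *ᵥ y) i / (n : ℝ)) • (1 : Matrix (Fin n) (Fin n) ℝ)) := by
  have hΛ' : Λ * Λᵀ = 1 := mul_eq_one_comm.mpr hΛ
  have hinv : Λ⁻¹ = Λᵀ := Matrix.inv_eq_left_inv hΛ
  have horth2 : ∀ p q, ∑ j, Λ p j * Λ q j = if p = q then (1:ℝ) else 0 := by
    intro p q
    have h := congrFun (congrFun hΛ' p) q
    simpa [Matrix.mul_apply, Matrix.one_apply] using h
  have hx : ∀ p, (Λ *ᵥ y) p = ∑ j, Λ p j * y j := fun p => rfl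
  rw [hequiv Λ hΛ hdet y i, hinv]
  have step1 : ∀ j, Λᵀ j i • (Λ * S y j * Λᵀ)
      = (Λ i j * (G₁ * y j)) •
          (vecMulVec (Λ *ᵥ y) (Λ *ᵥ y) - c • (1 : Matrix (Fin n) (Fin n) ℝ))
        + (Λ i j * G₂) • (vecMulVec (fun a => Λ a j) (Λ *ᵥ y)
            + vecMulVec (Λ *ᵥ y) (fun a => Λ a j)
            - (2 * y j / (n : ℝ)) • (1 : Matrix (Fin n) (Fin n) ℝ)) := by
    intro j
    rw [Matrix.transpose_apply, hy j]
    simp only [Matrix.mul_add, Matrix.add_mul, Matrix.mul_sub, Matrix.sub_mul,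
      Matrix.mul_smul, Matrix.smul_mul, Matrix.mul_one, conj_vecMulVec, mulVec_single_col,
      hΛ', smul_add, smul_sub, smul_smul]
    module
  rw [Finset.sum_congr rfl (fun j _ => step1 j), Finset.sum_add_distrib]
  congr 1
  · rw [← Finset.sum_smul]
    congr 1
    rw [hx i, Finset.mul_sum]
    exact Finset.sum_congr rfl fun j _ => by ring
  · ext a b
    simp only [Matrix.sum_apply, Matrix.smul_apply, Matrix.add_apply, Matrix.sub_apply,
      vecMulVec_apply, Matrix.one_apply, smul_eq_mul, Pi.single_apply]
    have hterm : ∀ j, Λ i j * G₂ * ((Λ a j * (Λ *ᵥ y) b + (Λ *ᵥ y) a * Λ b j)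
        - 2 * y j / (n:ℝ) * (if a = b then (1:ℝ) else 0))
        = G₂ * (Λ *ᵥ y) b * (Λ i j * Λ a j) + G₂ * (Λ *ᵥ y) a * (Λ i j * Λ b j)
          - (2 * G₂ / (n:ℝ) * (if a = b then (1:ℝ) else 0)) * (Λ i j * y j) := by
      intro j; ring
    rw [Finset.sum_congr rfl (fun j _ => hterm j), Finset.sum_sub_distrib,
      Finset.sum_add_distrib, ← Finset.mul_sum, ← Finset.mul_sum, ← Finset.mul_sum,
      horth2, horth2, ← hx i]
    by_cases h1 : i = a <;> by_cases h2 : i = b <;> by_cases h3 : a = b <;>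
      simp [h1, h2, h3, eq_comm] <;> ring

end Transfer2

section Rot

variable {n : ℕ} [NeZero n]

lemma nrm_nonneg (x : Fin n → ℝ) : 0 ≤ nrm x := Real.sqrt_nonneg _

lemma nrm_sq (x : Fin n → ℝ) : nrm x ^ 2 = ∑ i, x i ^ 2 :=
  Real.sq_sqrt (by positivity)

lemma nrm_pos (x : Fin n → ℝ) (hx : x ≠ 0) : 0 < nrm x := by
  obtain ⟨i, hi⟩ := Function.ne_iff.mp hx
  apply Real.sqrt_pos.mpr
  have : (0:ℝ) < x i ^ 2 := pow_two_pos_of_ne_zero hi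
  exact Finset.sum_pos' (fun j _ => by positivity) ⟨i, Finset.mem_univ i, this⟩

lemma exists_rotation (hn : 4 ≤ n) (x : Fin n → ℝ) (hx : x ≠ 0) :
    ∃ Λ : Matrix (Fin n) (Fin n) ℝ, Λᵀ * Λ = 1 ∧ Λ.det = 1 ∧
      Λ *ᵥ Pi.single 0 (nrm x) = x := by
  set r := nrm x with hrdef
  have hr : 0 < r := nrm_pos x hx
  have hr0 : r ≠ 0 := ne_of_gt hr
  set u : EuclideanSpace ℝ (Fin n) := WithLp.toLp 2 (fun k => r⁻¹ * x k) with hu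
  have hnu : ‖u‖ = 1 := by
    rw [EuclideanSpace.norm_eq]
    have : ∑ i, ‖u i‖ ^ 2 = r⁻¹ ^ 2 * ∑ i, x i ^ 2 := by
      rw [Finset.mul_sum]
      refine Finset.sum_congr rfl fun i _ => ?_
      rw [hu]
      simp only [Real.norm_eq_abs, sq_abs, PiLp.toLp_apply]
      ring
    rw [this, ← nrm_sq x, ← hrdef]
    rw [show r⁻¹ ^ 2 * r ^ 2 = 1 by field_simp]
    exact Real.sqrt_one
  have hv : Orthonormal ℝ (({0} : Set (Fin n)).restrict (fun _ : Fin n => u)) := by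
    constructor
    · intro i
      exact hnu
    · intro i j hij
      exact absurd (Subtype.ext ((i.2 : i.1 ∈ ({0} : Set (Fin n))).trans
        (j.2 : j.1 ∈ ({0} : Set (Fin n))).symm)) hij
  obtain ⟨b, hb⟩ := Orthonormal.exists_orthonormalBasis_extension_of_card_eq
    (by simp) hv
  have hb0 : b 0 = u := hb 0 rfl
  set Λ0 : Matrix (Fin n) (Fin n) ℝ := Matrix.of (fun a j => b j a) with hΛ0
  have horth0 : Λ0ᵀ * Λ0 = 1 := by
    ext p q
    have hio := orthonormal_iff_ite.mp b.orthonormal p q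
    rw [PiLp.inner_apply] at hio
    simp only [RCLike.inner_apply, starRingEnd_apply, star_trivial] at hio
    simp only [Matrix.mul_apply, Matrix.transpose_apply, hΛ0, Matrix.of_apply,
      Matrix.one_apply]
    rw [← hio]
    exact Finset.sum_congr rfl fun _ _ => mul_comm _ _
  have hcol0 : Λ0 *ᵥ Pi.single 0 r = x := by
    ext a
    simp only [Matrix.mulVec, dotProduct, hΛ0, Matrix.of_apply, Pi.single_apply]
    rw [Finset.sum_eq_single 0]
    · rw [if_pos rfl, hb0, hu]
      field_simp
    · intro c _ hc
      rw [if_neg hc, mul_zero]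
    · simp
  have hdet2 : Λ0.det = 1 ∨ Λ0.det = -1 := by
    have : Λ0.det * Λ0.det = 1 := by
      rw [show Λ0.det * Λ0.det = (Λ0ᵀ * Λ0).det by rw [Matrix.det_mul, Matrix.det_transpose],
        horth0, Matrix.det_one]
    exact mul_self_eq_one_iff.mp this
  rcases hdet2 with hdet | hdet
  · exact ⟨Λ0, horth0, hdet, hcol0⟩
  · set d : Fin n → ℝ := fun k => if k = 1 then -1 else 1 with hd
    set D := Matrix.diagonal d with hD
    have h10 : (1 : Fin n) ≠ 0 := one_ne_zero_fin hn
    refine ⟨Λ0 * D, ?_, ?_, ?_⟩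
    · rw [Matrix.transpose_mul, Matrix.mul_assoc, ← Matrix.mul_assoc Λ0ᵀ, horth0,
        Matrix.one_mul, hD, Matrix.diagonal_transpose, Matrix.diagonal_mul_diagonal]
      ext p q
      rcases eq_or_ne p q with rfl | hpq
      · simp only [Matrix.diagonal_apply_eq, Matrix.one_apply_eq]
        by_cases h : p = 1 <;> simp [hd, h]
      · rw [Matrix.diagonal_apply_ne _ hpq, Matrix.one_apply_ne hpq]
    · rw [Matrix.det_mul, hdet, hD, Matrix.det_diagonal, hd,
        Finset.prod_ite_eq' Finset.univ (1 : Fin n) (fun _ => (-1:ℝ))]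
      simp
    · have hDv : D *ᵥ Pi.single 0 r = Pi.single 0 r := by
        ext p
        rw [hD, Matrix.mulVec_diagonal]
        rcases eq_or_ne p 0 with rfl | hp
        · rw [show d 0 = 1 by simp [hd, Ne.symm h10]]
          rw [one_mul]
        · rw [Pi.single_eq_of_ne hp, mul_zero]
      rw [← Matrix.mulVec_mulVec, hDv, hcol0]

end Rot

theorem stmt13 (n : ℕ) (hn : 4 ≤ n)
    (S : (Fin n → ℝ) → Fin n → Matrix (Fin n) (Fin n) ℝ)
    (hsymm : ∀ x i, (S x i)ᵀ = S x i)
    (htr : ∀ x i, (S x i).trace = 0)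
    (hequiv : ∀ Λ : Matrix (Fin n) (Fin n) ℝ, Λᵀ * Λ = 1 → Λ.det = 1 →
      ∀ (x : Fin n → ℝ) (i : Fin n),
        S (Λ *ᵥ x) i = ∑ j, Λ⁻¹ j i • (Λ * S x j * Λᵀ)) :
    ∃ g₁ g₂ : ℝ → ℝ, ∀ (x : Fin n → ℝ) (i : Fin n),
      S x i = (g₁ (nrm x) * x i) •
          (vecMulVec x x - (nrm x ^ 2 / (n : ℝ)) • (1 : Matrix (Fin n) (Fin n) ℝ))
        + g₂ (nrm x) •
          (vecMulVec (Pi.single i 1) x + vecMulVec x (Pi.single i 1)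
            - (2 * x i / (n : ℝ)) • (1 : Matrix (Fin n) (Fin n) ℝ)) := by
  haveI : NeZero n := ⟨by omega⟩
  refine ⟨fun t => (-(n:ℝ) * S (Pi.single 0 t) 0 1 1 - 2 * S (Pi.single 0 t) 1 0 1) / t ^ 3,
    fun t => S (Pi.single 0 t) 1 0 1 / t, ?_⟩
  intro x i
  rcases eq_or_ne x 0 with rfl | hx
  · rw [Szero hn hequiv i]
    have h0 : nrm (0 : Fin n → ℝ) = 0 := by simp [nrm]
    rw [h0]
    simp
  · have hr : 0 < nrm x := nrm_pos x hx
    obtain ⟨Λ, hΛ, hdet, hcol⟩ := exists_rotation hn x hx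
    have hy := struct_formula hn hsymm htr hequiv (nrm x) hr
    have h := transfer hequiv Λ hΛ hdet (Pi.single 0 (nrm x))
      ((-(n:ℝ) * S (Pi.single 0 (nrm x)) 0 1 1 - 2 * S (Pi.single 0 (nrm x)) 1 0 1)
        / (nrm x) ^ 3)
      (S (Pi.single 0 (nrm x)) 1 0 1 / nrm x) ((nrm x) ^ 2 / (n:ℝ)) hy i
    rw [hcol] at h
    exact h
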